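/- For n ≥ 4, every x ∈ F₂ⁿ that is not the zero sequence, not the all-ones sequence, not (1,0,…,0), and not (0,…,0,1), satisfies |T(x)| > n. -/

import Mathlib

/-- The derivative of a binary sequence: `(∂x)ᵢ = xᵢ + xᵢ₊₁`. -/
def der {n : ℕ} (x : Fin n → ZMod 2) : Fin (n - 1) → ZMod 2 :=
  fun i => x ⟨i.1, by have := i.2; omega⟩ + x ⟨i.1 + 1, by have := i.2; omega⟩

/-- The iterated derivative `∂ʲx : F₂^{n-j}`. -/
def derIter {n : ℕ} (x : Fin n → ZMod 2) : (j : ℕ) → Fin (n - j) → ZMod 2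
  | 0 => x
  | j + 1 => der (derIter x j)

/-- The weight (number of ones) of a binary sequence. -/
def wt {m : ℕ} (y : Fin m → ZMod 2) : ℕ :=
  (Finset.univ.filter fun i => y i = 1).card

/-- The weight of the Steinhaus triangle of `x`: the sum of the weights of all rows. -/
def tw {n : ℕ} (x : Fin n → ZMod 2) : ℕ :=
  ∑ j ∈ Finset.range n, wt (derIter x j)

/-- The standard basis vector `e k` with a single one in position `k`. -/
def e (n k : ℕ) : Fin n → ZMod 2 := fun i => if i.1 = k then 1 else 0


lemma zmod2 (a : ZMod 2) : a = 0 ∨ a = 1 := by revert a; decide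

lemma wt_congr {a b : ℕ} (h : a = b) (f : Fin a → ZMod 2) (g : Fin b → ZMod 2)
    (hfg : ∀ (i : ℕ) (hi : i < a) (hi' : i < b), f ⟨i, hi⟩ = g ⟨i, hi'⟩) : wt f = wt g := by
  subst h
  have : f = g := funext fun i => by rcases i with ⟨i, hi⟩; exact hfg i hi hi
  rw [this]

lemma derIter_shift {n : ℕ} (x : Fin n → ZMod 2) :
    ∀ (j i : ℕ) (hi : i < n - (j + 1)) (hi' : i < n - 1 - j),
      derIter x (j + 1) ⟨i, hi⟩ = derIter (der x) j ⟨i, hi'⟩ := by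
  intro j
  induction j with
  | zero => intro i hi hi'; rfl
  | succ j ih =>
    intro i hi hi'
    have h1 : i < n - (j + 1) := by omega
    have h2 : i + 1 < n - (j + 1) := by omega
    have h1' : i < n - 1 - j := by omega
    have h2' : i + 1 < n - 1 - j := by omega
    show derIter x (j + 1) ⟨i, h1⟩ + derIter x (j + 1) ⟨i + 1, h2⟩ =
        derIter (der x) j ⟨i, h1'⟩ + derIter (der x) j ⟨i + 1, h2'⟩
    rw [ih i h1 h1', ih (i + 1) h2 h2']

lemma tw_der {n : ℕ} (hn : 1 ≤ n) (x : Fin n → ZMod 2) : tw x = wt x + tw (der x) := by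
  obtain ⟨m, rfl⟩ : ∃ m, n = m + 1 := ⟨n - 1, by omega⟩
  have hs : ∑ j ∈ Finset.range m, wt (derIter x (j + 1)) = tw (der x) := by
    unfold tw
    apply Finset.sum_congr rfl
    intro j hj
    have hj' : j < m := Finset.mem_range.mp hj
    exact wt_congr (by omega) _ _ (fun i hi hi' => derIter_shift x j i hi hi')
  show (∑ j ∈ Finset.range (m + 1), wt (derIter x j)) = _
  rw [Finset.sum_range_succ', hs]
  show tw (der x) + wt x = wt x + tw (der x)
  omega

lemma step {n : ℕ} (x : Fin n → ZMod 2) (i : ℕ) (h1 : i < n - 1) (h2 : i < n) (h3 : i + 1 < n) :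
    x ⟨i + 1, h3⟩ = x ⟨i, h2⟩ + der x ⟨i, h1⟩ := by
  have hder : der x ⟨i, h1⟩ = x ⟨i, h2⟩ + x ⟨i + 1, h3⟩ := rfl
  rw [hder]
  have h : ∀ a b : ZMod 2, b = a + (a + b) := by decide
  exact h _ _

lemma ext_of_der {n : ℕ} (hn : 0 < n) (x z : Fin n → ZMod 2)
    (h0 : x ⟨0, hn⟩ = z ⟨0, hn⟩) (hd : der x = der z) : x = z := by
  have key : ∀ i (hi : i < n), x ⟨i, hi⟩ = z ⟨i, hi⟩ := by
    intro i
    induction i with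
    | zero => intro hi; exact h0
    | succ i ih =>
      intro hi
      have h1 : i < n - 1 := by omega
      have h2 : i < n := by omega
      rw [step x i h1 h2 hi, step z i h1 h2 hi, ih h2, hd]
  funext i
  exact key i.1 i.2

lemma der_zero {n : ℕ} : der (0 : Fin n → ZMod 2) = 0 := by
  funext i; show (0 : ZMod 2) + 0 = 0; simp

lemma der_ones {n : ℕ} : der (fun _ : Fin n => (1 : ZMod 2)) = 0 := by
  funext i; show (1 : ZMod 2) + 1 = 0; decide

lemma derIter_zero {n : ℕ} : ∀ j, derIter (0 : Fin n → ZMod 2) j = 0 := by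
  intro j
  induction j with
  | zero => rfl
  | succ j ih => show der (derIter 0 j) = 0; rw [ih]; exact der_zero

lemma wt_zero {m : ℕ} : wt (0 : Fin m → ZMod 2) = 0 := by simp [wt]

lemma tw_zero {m : ℕ} : tw (0 : Fin m → ZMod 2) = 0 := by
  unfold tw
  rw [Finset.sum_congr rfl (fun j _ => by rw [derIter_zero j, wt_zero])]
  simp

lemma wt_ones {m : ℕ} : wt (fun _ : Fin m => (1 : ZMod 2)) = m := by simp [wt]

lemma tw_ones {m : ℕ} (hm : 1 ≤ m) : tw (fun _ : Fin m => (1 : ZMod 2)) = m := by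
  rw [tw_der hm, der_ones, tw_zero, wt_ones]
  omega

lemma wt_e {m k : ℕ} (h : k < m) : wt (e m k) = 1 := by
  unfold wt
  have he : (Finset.univ.filter fun i : Fin m => e m k i = 1) = {⟨k, h⟩} := by
    ext i
    simp only [Finset.mem_filter, Finset.mem_univ, true_and, Finset.mem_singleton, e]
    constructor
    · intro hi
      have hi : (if (i : ℕ) = k then (1 : ZMod 2) else 0) = 1 := by simpa using hi
      split at hi
      · exact Fin.ext (by assumption)
      · exact absurd hi (by decide)
    · rintro rfl; simp
  rw [he, Finset.card_singleton]

lemma der_e0 {m : ℕ} (hm : 1 ≤ m) : der (e m 0) = e (m - 1) 0 := by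
  funext i
  rcases i with ⟨i, hi⟩
  show (if i = 0 then (1 : ZMod 2) else 0) + (if i + 1 = 0 then 1 else 0) = if i = 0 then 1 else 0
  rw [if_neg (show ¬(i + 1 = 0) by omega), add_zero]

lemma der_elast (m : ℕ) : der (e (m + 2) (m + 1)) = e (m + 1) m := by
  funext i
  rcases i with ⟨i, hi⟩
  show (if i = m + 1 then (1 : ZMod 2) else 0) + (if i + 1 = m + 1 then 1 else 0) =
      if i = m then 1 else 0
  have hi' : i < m + 1 := by omega
  rw [if_neg (by omega), zero_add]
  by_cases h : i = m
  · rw [if_pos (by omega), if_pos h]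
  · rw [if_neg (by omega), if_neg h]

lemma tw_e0 : ∀ m, tw (e m 0) = m := by
  intro m
  induction m with
  | zero => simp [tw]
  | succ m ih =>
    rw [tw_der (by omega), wt_e (by omega)]
    have hd : der (e (m + 1) 0) = e m 0 := der_e0 (by omega)
    rw [hd, ih]
    omega

lemma tw_elast : ∀ m, tw (e (m + 1) m) = m + 1 := by
  intro m
  induction m with
  | zero => exact tw_e0 1
  | succ m ih =>
    rw [tw_der (by omega), wt_e (by omega), der_elast m, ih]
    omega

lemma one_le_wt {m : ℕ} (x : Fin m → ZMod 2) (h : x ≠ 0) : 1 ≤ wt x := by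
  by_contra hc
  apply h
  funext i
  rcases zmod2 (x i) with h1 | h1
  · exact h1
  · exfalso
    apply hc
    have : i ∈ Finset.univ.filter fun i => x i = 1 := by simp [h1]
    have := Finset.card_pos.mpr ⟨i, this⟩
    exact this

lemma two_le_wt {m : ℕ} (x : Fin m → ZMod 2) (i j : Fin m) (hij : i ≠ j)
    (hi : x i = 1) (hj : x j = 1) : 2 ≤ wt x := by
  have hsub : ({i, j} : Finset (Fin m)) ⊆ Finset.univ.filter fun k => x k = 1 := by
    intro k hk
    simp only [Finset.mem_insert, Finset.mem_singleton] at hk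
    rcases hk with rfl | rfl <;> simp [hi, hj]
  calc 2 = ({i, j} : Finset (Fin m)).card := (Finset.card_pair hij).symm
    _ ≤ _ := Finset.card_le_card hsub

lemma key : ∀ n, 4 ≤ n → ∀ x : Fin n → ZMod 2,
    x ≠ 0 → (x ≠ fun _ => 1) → x ≠ e n 0 → x ≠ e n (n - 1) → n < tw x := by
  intro n
  induction n using Nat.strong_induction_on with
  | _ n IH =>
    intro hn x h0 h1 h2 h3
    rcases eq_or_lt_of_le hn with h4 | h5
    · subst h4
      revert x h0 h1 h2 h3
      decide
    · obtain ⟨k, rfl⟩ : ∃ k, n = k + 5 := ⟨n - 5, by omega⟩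
      have htw : tw x = wt x + tw (der x) := tw_der (by omega) x
      have st : ∀ (i : ℕ) (h1 : i < k + 4) (h2 : i < k + 5) (h3 : i + 1 < k + 5),
          x ⟨i + 1, h3⟩ = x ⟨i, h2⟩ + der x ⟨i, h1⟩ := fun i a b c => step x i a b c
      by_cases hy0 : der x = 0
      · rcases zmod2 (x ⟨0, by omega⟩) with hx0 | hx0
        · exact absurd (ext_of_der (by omega) x 0 hx0 (by rw [hy0, der_zero])) h0
        · exact absurd (ext_of_der (by omega) x (fun _ => 1) hx0 (by rw [hy0, der_ones])) h1
      · by_cases hy1 : der x = fun _ => 1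
        · have hv : ∀ (i : ℕ) (hi : i < k + 4), der x ⟨i, hi⟩ = 1 :=
            fun i hi => congrFun hy1 ⟨i, hi⟩
          have htwy : tw (der x) = k + 4 := by rw [hy1]; exact tw_ones (by omega)
          rcases zmod2 (x ⟨0, by omega⟩) with hx0 | hx0
          · have hx1 : x ⟨1, by omega⟩ = 1 := by
              rw [st 0 (by omega) (by omega) (by omega), hx0, hv 0 (by omega)]; decide
            have hx2 : x ⟨2, by omega⟩ = 0 := by
              rw [st 1 (by omega) (by omega) (by omega), hx1, hv 1 (by omega)]; decide
            have hx3 : x ⟨3, by omega⟩ = 1 := by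
              rw [st 2 (by omega) (by omega) (by omega), hx2, hv 2 (by omega)]; decide
            have h2w : 2 ≤ wt x :=
              two_le_wt x ⟨1, by omega⟩ ⟨3, by omega⟩ (Fin.ne_of_val_ne (show (1:ℕ) ≠ 3 by omega)) hx1 hx3
            omega
          · have hx1 : x ⟨1, by omega⟩ = 0 := by
              rw [st 0 (by omega) (by omega) (by omega), hx0, hv 0 (by omega)]; decide
            have hx2 : x ⟨2, by omega⟩ = 1 := by
              rw [st 1 (by omega) (by omega) (by omega), hx1, hv 1 (by omega)]; decide
            have h2w : 2 ≤ wt x :=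
              two_le_wt x ⟨0, by omega⟩ ⟨2, by omega⟩ (Fin.ne_of_val_ne (show (0:ℕ) ≠ 2 by omega)) hx0 hx2
            omega
        · by_cases hye0 : der x = e (k + 4) 0
          · rcases zmod2 (x ⟨0, by omega⟩) with hx0 | hx0
            · have hv0 : der x ⟨0, by omega⟩ = 1 := by rw [hye0]; rfl
              have hv1 : der x ⟨1, by omega⟩ = 0 := by
                rw [hye0]
                show (if (1 : ℕ) = 0 then (1 : ZMod 2) else 0) = 0
                rw [if_neg (by omega)]
              have hx1 : x ⟨1, by omega⟩ = 1 := by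
                rw [st 0 (by omega) (by omega) (by omega), hx0, hv0]; decide
              have hx2 : x ⟨2, by omega⟩ = 1 := by
                rw [st 1 (by omega) (by omega) (by omega), hx1, hv1]; decide
              have h2w : 2 ≤ wt x :=
                two_le_wt x ⟨1, by omega⟩ ⟨2, by omega⟩ (Fin.ne_of_val_ne (show (1:ℕ) ≠ 2 by omega)) hx1 hx2
              have htwy : tw (der x) = k + 4 := by rw [hye0]; exact tw_e0 (k + 4)
              omega
            · refine absurd (ext_of_der (by omega) x (e (k + 5) 0) ?_ ?_) h2
              · rw [hx0]; rfl
              · rw [der_e0 (show 1 ≤ k + 5 by omega)]; exact hye0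
          · by_cases hyel : der x = e (k + 4) (k + 3)
            · rcases zmod2 (x ⟨0, by omega⟩) with hx0 | hx0
              · refine absurd (ext_of_der (by omega) x (e (k + 5) (k + 4)) ?_ ?_) h3
                · rw [hx0]
                  show (0 : ZMod 2) = if (0 : ℕ) = k + 4 then 1 else 0
                  rw [if_neg (by omega)]
                · exact hyel.trans (der_elast (k + 3)).symm
              · have hv0 : der x ⟨0, by omega⟩ = 0 := by
                  rw [hyel]
                  show (if (0 : ℕ) = k + 3 then (1 : ZMod 2) else 0) = 0
                  rw [if_neg (by omega)]
                have hx1 : x ⟨1, by omega⟩ = 1 := by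
                  rw [st 0 (by omega) (by omega) (by omega), hx0, hv0]; decide
                have h2w : 2 ≤ wt x :=
                  two_le_wt x ⟨0, by omega⟩ ⟨1, by omega⟩ (Fin.ne_of_val_ne (show (0:ℕ) ≠ 1 by omega)) hx0 hx1
                have htwy : tw (der x) = k + 4 := by rw [hyel]; exact tw_elast (k + 3)
                omega
            · have hIH := IH (k + 4) (by omega) (by omega) (der x) hy0 hy1 hye0 hyel
              have h1w : 1 ≤ wt x := one_le_wt x h0
              omega

theorem stmt8 (n : ℕ) (hn : 4 ≤ n) (x : Fin n → ZMod 2)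
    (h0 : x ≠ 0) (h1 : x ≠ fun _ => 1) (h2 : x ≠ e n 0) (h3 : x ≠ e n (n - 1)) :
    n < tw x := by
  exact key n hn x h0 h1 h2 h3
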